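/- arXiv:math/0601462 — 4 statements merged into one kernel-verified Lean document; each statement's English description precedes it below -/
import Mathlib

section
/- Let U be a 𝔟-module which is finitely generated as a U(𝔫)-module and all of whose elements are 𝔞-finite. Then U is the direct sum of its generalized weight spaces U_μ, for every k the set S_k = {μ ∈ 𝔞* : U_μ ≠ 0 and U_μ ⊄ 𝔫^kU} is finite, and the linear map φ : ∏_{μ∈𝔞*} U_μ → lim_k U/𝔫^kU, sending (x_μ)_μ to the compatible family whose k-th component is the class of the finite sum Σ_{μ∈S_k} x_μ modulo 𝔫^kU, is a well-defined linear isomorphism. -/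
set_option maxHeartbeats 1000000
set_option synthInstance.maxHeartbeats 400000

namespace Jb

variable (b : Type*) [LieRing b] [LieAlgebra ℂ b] [FiniteDimensional ℂ b]
variable (a n : LieSubalgebra ℂ b)

/-- The `𝔞`-weight space `𝔫_α = {X ∈ 𝔫 : [H,X] = α(H)·X for all H ∈ 𝔞}`,
regarded as a subspace of `𝔟`. -/
def wtSpace (α : Module.Dual ℂ a) : Submodule ℂ b where
  carrier := {X | X ∈ n ∧ ∀ H : a, ⁅(H : b), X⁆ = α H • X}
  zero_mem' := ⟨n.zero_mem, fun H => by simp⟩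
  add_mem' := fun {X Y} hX hY => ⟨n.add_mem hX.1 hY.1, fun H => by
    rw [lie_add, hX.2 H, hY.2 H, smul_add]⟩
  smul_mem' := fun c X hX => ⟨n.smul_mem c hX.1, fun H => by
    rw [lie_smul, hX.2 H, smul_comm]⟩

section ModuleU

variable (U : Type*) [AddCommGroup U] [Module ℂ U]
  [LieRingModule b U] [LieModule ℂ b U]

/-- The subspace `𝔫^k·U` of a `𝔟`-module `U`. -/
def nPowU : ℕ → Submodule ℂ U
  | 0 => ⊤
  | k + 1 => Submodule.span ℂ
      {z | ∃ x ∈ n, ∃ u ∈ nPowU k, z = ⁅x, u⁆}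

lemma nPowU_succ_le : ∀ k, nPowU b n U (k + 1) ≤ nPowU b n U k
  | 0 => le_top
  | k + 1 => Submodule.span_le.2 fun z hz => by
      obtain ⟨x, hx, u, hu, rfl⟩ := hz
      exact Submodule.subset_span ⟨x, hx, u, nPowU_succ_le k hu, rfl⟩

/-- The generalized weight space `U_μ` of the `𝔞`-action on `U`,
for `μ ∈ 𝔞* = Hom_ℂ(𝔞, ℂ)`. -/
def genWt (μ : Module.Dual ℂ a) : Submodule ℂ U :=
  ⨅ H : a, Module.End.maxGenEigenspace (LieModule.toEnd ℂ b U (H : b)) (μ H)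

/-- The set of `𝔞`-finite elements of `U`: the elements lying in some
finite-dimensional `𝔞`-stable subspace. -/
def aFinite : Set U :=
  {u | ∃ N : Submodule ℂ U, u ∈ N ∧ FiniteDimensional ℂ N ∧
    ∀ H : a, ∀ v ∈ N, ⁅(H : b), v⁆ ∈ N}

/-- `U` is finitely generated as a `U(𝔫)`-module: there is a finite subset `S` of `U`
such that the smallest `𝔫`-stable subspace of `U` containing `S` is all of `U`. -/
def FGOverN : Prop :=
  ∃ S : Finset U, ∀ N : Submodule ℂ U, (↑S : Set U) ⊆ N →
    (∀ x ∈ n, ∀ u ∈ N, ⁅x, u⁆ ∈ N) → N = ⊤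

/-- The transition map `U/𝔫^{k+1}U → U/𝔫^kU`. -/
def transU (k : ℕ) : (U ⧸ nPowU b n U (k + 1)) →ₗ[ℂ] U ⧸ nPowU b n U k :=
  Submodule.mapQ _ _ LinearMap.id
    (fun u hu => by simpa using nPowU_succ_le b n U k hu)

/-- `lim_k U/𝔫^kU`: the space of compatible families. -/
def limU : Submodule ℂ (∀ k, U ⧸ nPowU b n U k) where
  carrier := {f | ∀ k, transU b n U k (f (k + 1)) = f k}
  zero_mem' := fun k => map_zero _
  add_mem' := fun {f g} hf hg k => by
    simp only [Pi.add_apply, map_add, hf k, hg k]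
  smul_mem' := fun c f hf k => by
    simp only [Pi.smul_apply, map_smul, hf k]

/-- The set `S_k = {μ : U_μ ≠ 0 and U_μ ⊄ 𝔫^kU}`. -/
def Sk (k : ℕ) : Set (Module.Dual ℂ a) :=
  {μ | genWt b a U μ ≠ ⊥ ∧ ¬ genWt b a U μ ≤ nPowU b n U k}

/-- The canonical map `U → lim_k U/𝔫^kU`. -/
def canU (u : U) : limU b n U :=
  ⟨fun _ => Submodule.Quotient.mk u, fun _ => rfl⟩

end ModuleU

end Jb

set_option linter.unusedSectionVars false
section Aux
open Jb Module

variable {b : Type*} [LieRing b] [LieAlgebra ℂ b] [FiniteDimensional ℂ b]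
  {a n : LieSubalgebra ℂ b}
  {U : Type*} [AddCommGroup U] [Module ℂ U] [LieRingModule b U] [LieModule ℂ b U]

noncomputable local instance : DecidableEq (Module.Dual ℂ a) := Classical.decEq _

/-- The action of `H : a` on `U` as an endomorphism. -/
noncomputable def toE (U : Type*) [AddCommGroup U] [Module ℂ U] [LieRingModule b U]
    [LieModule ℂ b U] (H : a) : Module.End ℂ U := LieModule.toEnd ℂ b U (H : b)

lemma toE_apply (H : a) (u : U) : toE U H u = ⁅(H : b), u⁆ := rfl

lemma genWt_eq (μ : Module.Dual ℂ a) :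
    genWt b a U μ = ⨅ H : a, (toE U H).maxGenEigenspace (μ H) := rfl

lemma mem_genWt {μ : Module.Dual ℂ a} {u : U} :
    u ∈ genWt b a U μ ↔ ∀ H : a, ∃ k : ℕ, ((toE U H - μ H • 1) ^ k) u = 0 := by
  rw [genWt_eq]
  simp [Submodule.mem_iInf, Module.End.mem_maxGenEigenspace]

lemma commute_toE (hab : IsLieAbelian a) (H H' : a) :
    Commute (toE U H) (toE U H') := by
  have h0 : ⁅(H : b), (H' : b)⁆ = 0 := by
    rw [← LieSubalgebra.coe_bracket, trivial_lie_zero]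
    simp
  show toE U H * toE U H' = toE U H' * toE U H
  ext u
  simp only [Module.End.mul_apply, toE_apply]
  have := leibniz_lie (H : b) (H' : b) u
  rw [h0, zero_lie, zero_add] at this
  exact this

lemma indep_genWt (hab : IsLieAbelian a) :
    iSupIndep fun μ : Module.Dual ℂ a => genWt b a U μ := by
  have h := Module.End.independent_iInf_maxGenEigenspace_of_forall_mapsTo
    (fun H : a => toE U H)
    (fun i j φ => Module.End.mapsTo_maxGenEigenspace_of_comm (commute_toE hab j i) φ)
  exact h.comp (fun μ ν hh => LinearMap.coe_injective hh)

lemma lie_genWt_mem {α μ : Module.Dual ℂ a} {x : b} (hx : x ∈ wtSpace b a n α)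
    {u : U} (hu : u ∈ genWt b a U μ) : ⁅x, u⁆ ∈ genWt b a U (α + μ) := by
  rw [mem_genWt] at hu ⊢
  intro H
  obtain ⟨k, hk⟩ := hu H
  refine ⟨k, ?_⟩
  have key : ∀ w : U, (toE U H - (α + μ) H • 1) ⁅x, w⁆ = ⁅x, (toE U H - μ H • 1) w⁆ := by
    intro w
    simp only [LinearMap.sub_apply, LinearMap.smul_apply, Module.End.one_apply, toE_apply]
    rw [leibniz_lie, hx.2 H, smul_lie, lie_sub, lie_smul]
    simp only [LinearMap.map_add, LinearMap.add_apply]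
    abel_nf
    simp [add_smul]
    abel
  have main : ∀ (k : ℕ) (w : U),
      ((toE U H - (α + μ) H • 1) ^ k) ⁅x, w⁆ = ⁅x, ((toE U H - μ H • 1) ^ k) w⁆ := by
    intro k
    induction k with
    | zero => intro w; simp
    | succ k ih =>
      intro w
      rw [pow_succ, Module.End.mul_apply, pow_succ, Module.End.mul_apply, key w, ih]
  rw [main k u, hk, lie_zero]

/-- Master lemma: bracketing with `n` maps a sup of weight pieces into another. -/
lemma lie_mem_iSup {Φ : Finset (Module.Dual ℂ a)}
    (hwtsup : n.toSubmodule = ⨆ α ∈ Φ, wtSpace b a n α)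
    (C C' : Module.Dual ℂ a → Submodule ℂ U)
    (h : ∀ α ∈ Φ, ∀ ν, ∀ x ∈ wtSpace b a n α, ∀ u ∈ C ν, ⁅x, u⁆ ∈ ⨆ τ, C' τ) :
    ∀ x ∈ n, ∀ u ∈ ⨆ ν, C ν, ⁅x, u⁆ ∈ ⨆ τ, C' τ := by
  intro x hx u hu
  let P₁ : Submodule ℂ b :=
    { carrier := {z : b | ∀ v ∈ ⨆ ν, C ν, ⁅z, v⁆ ∈ ⨆ τ, C' τ}
      zero_mem' := fun v _ => by rw [zero_lie]; exact Submodule.zero_mem _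
      add_mem' := fun {z w} hz hw v hv => by
        rw [add_lie]; exact Submodule.add_mem _ (hz v hv) (hw v hv)
      smul_mem' := fun c z hz v hv => by
        rw [smul_lie]; exact Submodule.smul_mem _ _ (hz v hv) }
  have hx' : x ∈ (⨆ α ∈ Φ, wtSpace b a n α) := by
    rw [← hwtsup]; exact hx
  have hle : (⨆ α ∈ Φ, wtSpace b a n α) ≤ P₁ := by
    refine iSup₂_le fun α hα => ?_
    intro z hz v hv
    -- induct on v in the sup
    have : (⨆ ν, C ν) ≤ Submodule.comap (LieModule.toEnd ℂ b U z) (⨆ τ, C' τ) := by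
      refine iSup_le fun ν w hw => ?_
      exact h α hα ν z hz w hw
    exact this hv
  exact hle hx' u hu

lemma nPow_antitone {k l : ℕ} (h : k ≤ l) : nPowU b n U l ≤ nPowU b n U k :=
  antitone_nat_of_succ_le (fun m => nPowU_succ_le b n U m) h

lemma nPow_stable (hideal : ∀ x : b, ∀ y ∈ n, ⁅x, y⁆ ∈ n) :
    ∀ (k : ℕ) (H : a), ∀ v ∈ nPowU b n U k, ⁅(H : b), v⁆ ∈ nPowU b n U k := by
  intro k
  induction k with
  | zero => intro H v _; exact Submodule.mem_top
  | succ k ih =>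
    intro H v hv
    have : nPowU b n U (k + 1) ≤
        Submodule.comap (LieModule.toEnd ℂ b U (H : b)) (nPowU b n U (k + 1)) := by
      rw [show nPowU b n U (k+1) = Submodule.span ℂ
        {z | ∃ x ∈ n, ∃ u ∈ nPowU b n U k, z = ⁅x, u⁆} from rfl]
      rw [Submodule.span_le]
      rintro z ⟨x, hxn, w, hw, rfl⟩
      simp only [Submodule.mem_comap, SetLike.mem_coe]
      have : (LieModule.toEnd ℂ b U (H : b)) ⁅x, w⁆ = ⁅⁅(H : b), x⁆, w⁆ + ⁅x, ⁅(H : b), w⁆⁆ := by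
        rw [LieModule.toEnd_apply_apply, leibniz_lie]
      rw [this]
      refine Submodule.add_mem _ ?_ ?_
      · exact Submodule.subset_span ⟨⁅(H : b), x⁆, hideal _ _ hxn, w, hw, rfl⟩
      · exact Submodule.subset_span ⟨x, hxn, ⁅(H : b), w⁆, ih H w hw, rfl⟩
    exact this hv

lemma lie_nPow_mem {x : b} (hx : x ∈ n) {k : ℕ} {u : U} (hu : u ∈ nPowU b n U k) :
    ⁅x, u⁆ ∈ nPowU b n U (k + 1) :=
  Submodule.subset_span ⟨x, hx, u, hu, rfl⟩

/-- Existence of a finite decomposition from membership in a supremum. -/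
lemma exists_finset_sum {ι : Type*} (C : ι → Submodule ℂ U) {v : U} (hv : v ∈ ⨆ ν, C ν) :
    ∃ (s : Finset ι) (y : ι → U), (∀ μ, y μ ∈ C μ) ∧ (∀ μ ∉ s, y μ = 0) ∧ ∑ μ ∈ s, y μ = v := by
  obtain ⟨c, hc, hsum⟩ := (Submodule.mem_iSup_iff_exists_finsupp C v).mp hv
  exact ⟨c.support, ⇑c, hc, fun μ hμ => Finsupp.notMem_support_iff.mp hμ, hsum⟩

lemma sum_genWt_eq_zero (hab : IsLieAbelian a) (s : Finset (Module.Dual ℂ a))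
    (y : Module.Dual ℂ a → U) (hy : ∀ μ, y μ ∈ genWt b a U μ)
    (hys : ∀ μ ∉ s, y μ = 0) (h : ∑ μ ∈ s, y μ = 0) : ∀ μ, y μ = 0 := by
  intro μ
  by_cases hμ : μ ∈ s
  · have hrepr : y μ = -∑ ν ∈ s.erase μ, y ν := by
      have h2 := Finset.add_sum_erase s y hμ
      rw [h] at h2
      exact eq_neg_of_add_eq_zero_left h2
    have hmem : y μ ∈ ⨆ ν, ⨆ (_ : ν ≠ μ), genWt b a U ν := by
      rw [hrepr]
      exact Submodule.neg_mem _ (Submodule.sum_mem _ fun ν hν =>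
        Submodule.mem_iSup_of_mem ν (Submodule.mem_iSup_of_mem
          (Finset.ne_of_mem_erase hν) (hy ν)))
    exact Submodule.disjoint_def.mp (indep_genWt hab μ) _ (hy μ) hmem
  · exact hys μ hμ

lemma components_unique (hab : IsLieAbelian a) (s t : Finset (Module.Dual ℂ a))
    (y z : Module.Dual ℂ a → U) (hy : ∀ μ, y μ ∈ genWt b a U μ)
    (hz : ∀ μ, z μ ∈ genWt b a U μ) (hys : ∀ μ ∉ s, y μ = 0) (hzt : ∀ μ ∉ t, z μ = 0)
    (h : ∑ μ ∈ s, y μ = ∑ μ ∈ t, z μ) : y = z := by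
  have hsum : ∑ μ ∈ s ∪ t, (y μ - z μ) = 0 := by
    rw [Finset.sum_sub_distrib]
    rw [← Finset.sum_subset (Finset.subset_union_left (s₂ := t)) (fun μ _ hμ => hys μ hμ),
      ← Finset.sum_subset (Finset.subset_union_right (s₁ := s)) (fun μ _ hμ => hzt μ hμ), h,
      sub_self]
  have := sum_genWt_eq_zero hab (s ∪ t) (fun μ => y μ - z μ)
    (fun μ => Submodule.sub_mem _ (hy μ) (hz μ))
    (fun μ hμ => by
      rw [Finset.mem_union, not_or] at hμ
      show y μ - z μ = 0
      rw [hys μ hμ.1, hzt μ hμ.2, sub_self]) hsum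
  funext μ
  exact sub_eq_zero.mp (this μ)

/-- If `v` lies in `genWt μ` and in a sup of pieces `C ν ≤ genWt ν`, then `v ∈ C μ`. -/
lemma mem_piece_of_mem_iSup (hab : IsLieAbelian a) (C : Module.Dual ℂ a → Submodule ℂ U)
    (hC : ∀ ν, C ν ≤ genWt b a U ν) {μ : Module.Dual ℂ a} {v : U}
    (hv : v ∈ genWt b a U μ) (hv' : v ∈ ⨆ ν, C ν) : v ∈ C μ := by
  obtain ⟨s, y, hy, hys, hsum⟩ := exists_finset_sum C hv'
  classical
  have huniq := components_unique hab s {μ} y (fun ν => if ν = μ then v else 0)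
    (fun ν => hC ν (hy ν))
    (fun ν => by by_cases hc : ν = μ
                 · subst hc; simpa using hv
                 · simp [hc])
    hys
    (fun ν hν => by simp at hν; simp [hν])
    (by simpa using hsum)
  have := congrFun huniq μ
  simp at this
  rw [← this]
  exact hy μ


lemma exists_dual_of_ne_bot (hab : IsLieAbelian a) (χ : a → ℂ)
    (h : (⨅ H : a, (toE U H).maxGenEigenspace (χ H)) ≠ ⊥) :
    ∃ μ : Module.Dual ℂ a, ⇑μ = χ := by
  let ρₗ : a →ₗ[ℂ] Module.End ℂ U :=
    { toFun := fun H => toE U H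
      map_add' := fun H H' => by
        show LieModule.toEnd ℂ b U ((H + H' : a) : b) = _
        push_cast
        rw [map_add]
        rfl
      map_smul' := fun t H => by
        show LieModule.toEnd ℂ b U ((t • H : a) : b) = _
        have hc : ((t • H : a) : b) = t • (H : b) := rfl
        rw [hc, map_smul]
        rfl }
  have hne : (⨅ H : a, (ρₗ H).genEigenspace (χ H) ⊤) ≠ ⊥ := h
  refine ⟨{ toFun := χ
            map_add' := fun x y =>
              Module.End.map_add_of_iInf_genEigenspace_ne_bot_of_commute ρₗ χ ⊤ hne
                (fun H H' => commute_toE hab H H') x y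
            map_smul' := fun t x => by
              simpa using
                Module.End.map_smul_of_iInf_genEigenspace_ne_bot ρₗ χ ⊤ hne t x }, rfl⟩

/-- Restriction of the `a`-action to a stable submodule. -/
noncomputable def resE {N : Submodule ℂ U} (hst : ∀ H : a, ∀ v ∈ N, ⁅(H : b), v⁆ ∈ N)
    (H : a) : Module.End ℂ ↥N :=
  (toE U H).restrict (fun x hx => hst H x hx)

lemma resE_coe {N : Submodule ℂ U} (hst : ∀ H : a, ∀ v ∈ N, ⁅(H : b), v⁆ ∈ N)
    (H : a) (v : ↥N) : (resE hst H v : U) = toE U H ↑v := rfl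

lemma resE_comm {N : Submodule ℂ U} (hab : IsLieAbelian a)
    (hst : ∀ H : a, ∀ v ∈ N, ⁅(H : b), v⁆ ∈ N) (H H' : a) :
    Commute (resE hst H) (resE hst H') := by
  have h : Commute (toE U H) (toE U H') := commute_toE hab H H'
  ext v
  have h2 := LinearMap.ext_iff.mp h (v : U)
  simp only [Module.End.mul_apply] at h2 ⊢
  rw [resE_coe, resE_coe, resE_coe, resE_coe]
  exact h2

lemma resE_pow_coe {N : Submodule ℂ U} (hst : ∀ H : a, ∀ v ∈ N, ⁅(H : b), v⁆ ∈ N)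
    (H : a) (c : ℂ) : ∀ (k : ℕ) (v : ↥N),
    ((((resE hst H) - c • 1) ^ k) v : U) = ((toE U H - c • 1) ^ k) (v : U) := by
  intro k
  induction k with
  | zero => intro v; simp
  | succ k ih =>
    intro v
    have hstep : (((resE hst H - c • 1) v : ↥N) : U) = (toE U H - c • 1) (v : U) := by
      simp only [LinearMap.sub_apply, LinearMap.smul_apply, Module.End.one_apply,
        AddSubgroupClass.coe_sub, SetLike.val_smul, resE_coe]
    rw [pow_succ, Module.End.mul_apply, pow_succ, Module.End.mul_apply,
      ih ((resE hst H - c • 1) v), hstep]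

lemma coe_mem_iInf_of_resE {N : Submodule ℂ U} (hst : ∀ H : a, ∀ v ∈ N, ⁅(H : b), v⁆ ∈ N)
    {χ : a → ℂ} {v : ↥N} (hv : v ∈ ⨅ H : a, (resE hst H).maxGenEigenspace (χ H)) :
    (v : U) ∈ ⨅ H : a, (toE U H).maxGenEigenspace (χ H) := by
  rw [Submodule.mem_iInf] at hv ⊢
  intro H
  obtain ⟨k, hk⟩ := (Module.End.mem_maxGenEigenspace _ _ _).mp (hv H)
  exact (Module.End.mem_maxGenEigenspace _ _ _).mpr
    ⟨k, by rw [← resE_pow_coe hst H (χ H) k v, hk, ZeroMemClass.coe_zero]⟩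

lemma mem_iInf_resE_of_coe {N : Submodule ℂ U} (hst : ∀ H : a, ∀ v ∈ N, ⁅(H : b), v⁆ ∈ N)
    {χ : a → ℂ} {v : U} (hvN : v ∈ N)
    (hv : v ∈ ⨅ H : a, (toE U H).maxGenEigenspace (χ H)) :
    (⟨v, hvN⟩ : ↥N) ∈ ⨅ H : a, (resE hst H).maxGenEigenspace (χ H) := by
  rw [Submodule.mem_iInf] at hv ⊢
  intro H
  obtain ⟨k, hk⟩ := (Module.End.mem_maxGenEigenspace _ _ _).mp (hv H)
  refine (Module.End.mem_maxGenEigenspace _ _ _).mpr ⟨k, Subtype.ext ?_⟩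
  rw [resE_pow_coe hst H (χ H) k]
  exact hk

lemma findim_decomp (hab : IsLieAbelian a) {N : Submodule ℂ U}
    (hN : FiniteDimensional ℂ ↥N) (hst : ∀ H : a, ∀ v ∈ N, ⁅(H : b), v⁆ ∈ N) :
    N ≤ ⨆ μ : Module.Dual ℂ a, (N ⊓ genWt b a U μ) := by
  haveI := hN
  have hT : ⨆ χ : a → ℂ, ⨅ H : a, (resE hst H).maxGenEigenspace (χ H) = ⊤ :=
    Module.End.iSup_iInf_maxGenEigenspace_eq_top_of_iSup_maxGenEigenspace_eq_top_of_commute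
      (resE hst) (fun H H' _ => resE_comm hab hst H H')
      (fun H => Module.End.iSup_maxGenEigenspace_eq_top _)
  intro v hv
  have hvT : (⟨v, hv⟩ : ↥N) ∈ ⨆ χ : a → ℂ, ⨅ H : a, (resE hst H).maxGenEigenspace (χ H) := by
    rw [hT]; trivial
  obtain ⟨c, hc, hsum⟩ := (Submodule.mem_iSup_iff_exists_finsupp _ _).mp hvT
  have hv' : v = ∑ χ ∈ c.support, ((c χ : ↥N) : U) := by
    have := congrArg (N.subtype) hsum
    rw [map_finsuppSum] at this
    exact this.symm
  rw [hv']
  refine Submodule.sum_mem _ fun χ hχ => ?_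
  have hne : (c χ : ↥N) ≠ 0 := Finsupp.mem_support_iff.mp hχ
  have hcoe : ((c χ : ↥N) : U) ∈ ⨅ H : a, (toE U H).maxGenEigenspace (χ H) :=
    coe_mem_iInf_of_resE hst (hc χ)
  have hWne : (⨅ H : a, (toE U H).maxGenEigenspace (χ H)) ≠ ⊥ := by
    intro hbot
    rw [hbot, Submodule.mem_bot] at hcoe
    exact hne (Subtype.ext hcoe)
  obtain ⟨μ, hμ⟩ := exists_dual_of_ne_bot hab χ hWne
  refine Submodule.mem_iSup_of_mem μ (Submodule.mem_inf.mpr ⟨(c χ : ↥N).2, ?_⟩)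
  rw [genWt_eq, show (⇑μ : a → ℂ) = χ from hμ]
  exact hcoe

lemma findim_wts_finite (hab : IsLieAbelian a) {N : Submodule ℂ U}
    (hN : FiniteDimensional ℂ ↥N) (hst : ∀ H : a, ∀ v ∈ N, ⁅(H : b), v⁆ ∈ N) :
    {μ : Module.Dual ℂ a | N ⊓ genWt b a U μ ≠ ⊥}.Finite := by
  haveI := hN
  have hind : iSupIndep (fun χ : a → ℂ => ⨅ H : a, (resE hst H).maxGenEigenspace (χ H)) :=
    Module.End.independent_iInf_maxGenEigenspace_of_forall_mapsTo (resE hst)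
      (fun i j φ => Module.End.mapsTo_maxGenEigenspace_of_comm (resE_comm hab hst j i) φ)
  have hfin : {χ : a → ℂ | (⨅ H : a, (resE hst H).maxGenEigenspace (χ H)) ≠ ⊥}.Finite :=
    WellFoundedGT.finite_ne_bot_of_iSupIndep hind
  have hsub : {μ : Module.Dual ℂ a | N ⊓ genWt b a U μ ≠ ⊥} ⊆
      (fun μ : Module.Dual ℂ a => (⇑μ : a → ℂ)) ⁻¹'
        {χ : a → ℂ | (⨅ H : a, (resE hst H).maxGenEigenspace (χ H)) ≠ ⊥} := by
    intro μ hμ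
    obtain ⟨v, hvmem, hvne⟩ := Submodule.exists_mem_ne_zero_of_ne_bot hμ
    obtain ⟨hvN, hvW⟩ := Submodule.mem_inf.mp hvmem
    have hmem := mem_iInf_resE_of_coe hst hvN (by rw [genWt_eq] at hvW; exact hvW)
    simp only [Set.mem_preimage, Set.mem_setOf_eq]
    intro hbot
    rw [hbot, Submodule.mem_bot] at hmem
    exact hvne (by simpa using congrArg (Subtype.val) hmem)
  exact Set.Finite.subset (hfin.preimage ((LinearMap.coe_injective).injOn)) hsub

lemma sup_genWt_top (hab : IsLieAbelian a) (hafin : ∀ u : U, u ∈ aFinite b a U) :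
    (⨆ μ : Module.Dual ℂ a, genWt b a U μ) = ⊤ := by
  rw [eq_top_iff]
  intro u _
  obtain ⟨N, huN, hfd, hst⟩ := hafin u
  exact (le_trans (findim_decomp hab hfd hst) (iSup_mono fun μ => inf_le_right)) huN

lemma nPow_decomp (hab : IsLieAbelian a) (hideal : ∀ x : b, ∀ y ∈ n, ⁅x, y⁆ ∈ n)
    (hafin : ∀ u : U, u ∈ aFinite b a U) (k : ℕ) :
    nPowU b n U k ≤ ⨆ ν : Module.Dual ℂ a, (nPowU b n U k ⊓ genWt b a U ν) := by
  intro v hv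
  obtain ⟨N, hvN, hNfd, hNst⟩ := hafin v
  have hle : N ⊓ nPowU b n U k ≤ N := inf_le_left
  haveI : FiniteDimensional ℂ ↥(N ⊓ nPowU b n U k) :=
    Submodule.finiteDimensional_of_le hle
  have hst' : ∀ H : a, ∀ w ∈ N ⊓ nPowU b n U k, ⁅(H : b), w⁆ ∈ N ⊓ nPowU b n U k :=
    fun H w hw => ⟨hNst H w hw.1, nPow_stable hideal k H w hw.2⟩
  have := findim_decomp hab ‹_› hst' (Submodule.mem_inf.mpr ⟨hvN, hv⟩)
  exact (iSup_mono fun μ =>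
    inf_le_inf_right _ (inf_le_right : N ⊓ nPowU b n U k ≤ _)) this

lemma finset_sup_stable {X : Type*} (T : Finset X) (NS : X → Submodule ℂ U)
    (hfd : ∀ u, FiniteDimensional ℂ (NS u))
    (hst : ∀ u, ∀ H : a, ∀ v ∈ NS u, ⁅(H : b), v⁆ ∈ NS u) :
    FiniteDimensional ℂ ↥(T.sup NS) ∧
      (∀ H : a, ∀ v ∈ T.sup NS, ⁅(H : b), v⁆ ∈ T.sup NS) := by
  classical
  induction T using Finset.cons_induction with
  | empty =>
    constructor
    · rw [Finset.sup_empty]; exact (inferInstance : FiniteDimensional ℂ (⊥ : Submodule ℂ U))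
    · intro H v hv
      simp only [Finset.sup_empty] at hv ⊢
      have hz : v = 0 := by simpa using hv
      rw [hz, lie_zero]
      exact Submodule.zero_mem _
  | cons s T hs ih =>
    rw [Finset.sup_cons]
    constructor
    · haveI := ih.1
      haveI := hfd s
      exact Submodule.finiteDimensional_sup _ _
    · intro H v hv
      obtain ⟨x, hx, y, hy, rfl⟩ := Submodule.mem_sup.mp hv
      rw [lie_add]
      exact Submodule.add_mem _ (Submodule.mem_sup_left (hst s H x hx))
        (Submodule.mem_sup_right (ih.2 H y hy))

lemma core (hab : IsLieAbelian a) (hideal : ∀ x : b, ∀ y ∈ n, ⁅x, y⁆ ∈ n)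
    {Φ : Finset (Module.Dual ℂ a)}
    (hwtsup : n.toSubmodule = ⨆ α ∈ Φ, wtSpace b a n α)
    (hH₀ : ∃ H : a, ∀ α ∈ Φ, 0 < ((α : Module.Dual ℂ a) H).re)
    (hfg : FGOverN b n U) (hafin : ∀ u : U, u ∈ aFinite b a U) :
    (∀ k, (Sk b a n U k).Finite) ∧
      (∀ μ : Module.Dual ℂ a, ∃ K : ℕ, genWt b a U μ ⊓ nPowU b n U K = ⊥) := by
  classical
  obtain ⟨S, hS⟩ := hfg
  choose NS hNS1 hNS2 hNS3 using fun u : U => hafin u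
  set W : Submodule ℂ U := S.sup (fun s => NS s) with hWdef
  obtain ⟨hWfd, hWst⟩ := finset_sup_stable S (fun s => NS s) (fun u => hNS2 u) (fun u => hNS3 u)
  have hSW : (↑S : Set U) ⊆ (W : Set U) :=
    fun s hs => Finset.le_sup (f := fun s => NS s) hs (hNS1 s)
  set F : Finset (Module.Dual ℂ a) := (findim_wts_finite hab hWfd hWst).toFinset with hFdef
  have hFmem : ∀ ν, ν ∈ F ↔ W ⊓ genWt b a U ν ≠ ⊥ := by
    intro ν; rw [hFdef, Set.Finite.mem_toFinset]; rfl
  -- the chains of weight sets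
  set Q : ℕ → Finset (Module.Dual ℂ a) :=
    fun m => Nat.rec F (fun _ Qm => Qm ∪ Finset.image₂ (fun α ν => α + ν) Φ Qm) m with hQdef
  have hQ0 : Q 0 = F := rfl
  have hQsucc : ∀ m, Q (m + 1) = Q m ∪ Finset.image₂ (fun α ν => α + ν) Φ (Q m) :=
    fun m => rfl
  have hQadd : ∀ m, ∀ α ∈ Φ, ∀ ν ∈ Q m, α + ν ∈ Q (m + 1) := by
    intro m α hα ν hν
    rw [hQsucc]
    exact Finset.mem_union_right _ (Finset.mem_image₂_of_mem hα hν)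
  set P : Set (Module.Dual ℂ a) := ⋃ m, ↑(Q m) with hPdef
  have hPQ : ∀ μ, μ ∈ P ↔ ∃ m, μ ∈ Q m := by
    intro μ; rw [hPdef]; simp
  -- generic "restricted weight family"
  let Cif : Set (Module.Dual ℂ a) → Module.Dual ℂ a → Submodule ℂ U :=
    fun T ν => if ν ∈ T then genWt b a U ν else ⊥
  have hCif_le : ∀ T ν, Cif T ν ≤ genWt b a U ν := by
    intro T ν
    by_cases h : ν ∈ T <;> simp [Cif, h]
  have hWZ : ∀ (T : Set (Module.Dual ℂ a)), (↑F : Set (Module.Dual ℂ a)) ⊆ T →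
      W ≤ ⨆ ν, Cif T ν := by
    intro T hFT
    refine le_trans (findim_decomp hab hWfd hWst) (iSup_mono fun ν => ?_)
    by_cases hν : ν ∈ F
    · have : ν ∈ T := hFT hν
      simp only [Cif, if_pos this]
      exact inf_le_right
    · have : W ⊓ genWt b a U ν = ⊥ := by
        by_contra hne
        exact hν ((hFmem ν).mpr hne)
      rw [this]
      exact bot_le
  -- Z P is everything
  have hZP : (⨆ ν, Cif P ν) = ⊤ := by
    refine hS _ (fun s hs => hWZ P (fun ν hν => (hPQ ν).mpr ⟨0, hν⟩) (hSW hs)) ?_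
    intro x hx u hu
    refine lie_mem_iSup hwtsup (Cif P) (Cif P) ?_ x hx u hu
    intro α hα ν x' hx' u' hu'
    by_cases hνP : ν ∈ P
    · have hu'' : u' ∈ genWt b a U ν := by simpa [Cif, hνP] using hu'
      obtain ⟨m, hm⟩ := (hPQ ν).mp hνP
      have hαν : (α + ν) ∈ P := (hPQ _).mpr ⟨m + 1, hQadd m α hα ν hm⟩
      exact Submodule.mem_iSup_of_mem (α + ν)
        (by simpa [Cif, hαν] using lie_genWt_mem hx' hu'')
    · have : u' = 0 := by simpa [Cif, hνP] using hu'
      rw [this, lie_zero]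
      exact Submodule.zero_mem _
  have hgenbot : ∀ μ : Module.Dual ℂ a, μ ∉ P → genWt b a U μ = ⊥ := by
    intro μ hμ
    rw [eq_bot_iff]
    intro v hv
    have hvZ : v ∈ ⨆ ν, Cif P ν := by rw [hZP]; trivial
    have := mem_piece_of_mem_iSup hab (Cif P) (hCif_le P) hv hvZ
    simpa [Cif, hμ] using this
  -- minimal number of steps
  set kf : Module.Dual ℂ a → ℕ := fun ν => sInf {m | ν ∈ Q m} with hkfdef
  have hkfQ : ∀ ν, ν ∈ P → ν ∈ Q (kf ν) := by
    intro ν hν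
    obtain ⟨m, hm⟩ := (hPQ ν).mp hν
    exact Nat.sInf_mem (⟨m, hm⟩ : {m | ν ∈ Q m}.Nonempty)
  have hkf_le : ∀ m ν, ν ∈ Q m → kf ν ≤ m := fun m ν h => Nat.sInf_le h
  -- the graded family
  let CG : Module.Dual ℂ a → Submodule ℂ U :=
    fun ν => nPowU b n U (kf ν) ⊓ genWt b a U ν
  have hG : (⨆ ν, CG ν) = ⊤ := by
    refine hS _ (fun s hs => ?_) ?_
    · have h1 : W ≤ ⨆ ν, Cif (↑F) ν := hWZ _ (fun ν hν => hν)
      have h2 : ∀ ν, Cif (↑F) ν ≤ CG ν := by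
        intro ν
        by_cases hν : ν ∈ F
        · have hc : ν ∈ (↑F : Set _) := hν
          have hk0 : kf ν = 0 := Nat.le_zero.mp (hkf_le 0 ν (by rw [hQ0]; exact hν))
          have he1 : Cif (↑F) ν = genWt b a U ν := if_pos hc
          have he2 : CG ν = genWt b a U ν := by
            show nPowU b n U (kf ν) ⊓ genWt b a U ν = _
            rw [hk0, show nPowU b n U 0 = ⊤ from rfl, top_inf_eq]
          rw [he1, he2]
        · have hc : ν ∉ (↑F : Set _) := by simpa using hν
          have he1 : Cif (↑F) ν = ⊥ := if_neg hc
          rw [he1]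
          exact bot_le
      exact (le_trans h1 (iSup_mono h2)) (hSW hs)
    · intro x hx u hu
      refine lie_mem_iSup hwtsup CG CG ?_ x hx u hu
      intro α hα ν x' hx' u' hu'
      obtain ⟨hu1, hu2⟩ := hu'
      by_cases hνP : ν ∈ P
      · have h3 : kf (α + ν) ≤ kf ν + 1 := hkf_le _ _ (hQadd _ α hα ν (hkfQ ν hνP))
        exact Submodule.mem_iSup_of_mem (α + ν)
          ⟨nPow_antitone h3 (lie_nPow_mem hx'.1 hu1), lie_genWt_mem hx' hu2⟩
      · have hz : u' = 0 := by
          have hb := hgenbot ν hνP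
          rw [hb] at hu2
          simpa using hu2
        rw [hz, lie_zero]
        exact Submodule.zero_mem _
  have hkey : ∀ μ, genWt b a U μ ≤ nPowU b n U (kf μ) := by
    intro μ v hv
    have hvG : v ∈ ⨆ ν, CG ν := by rw [hG]; trivial
    exact (mem_piece_of_mem_iSup hab CG (fun ν => inf_le_right) hv hvG).1
  have hSk : ∀ k, (Sk b a n U k).Finite := by
    intro k
    refine Set.Finite.subset (Finset.finite_toSet ((Finset.range k).biUnion Q)) ?_
    rintro μ ⟨hne, hnle⟩
    have hμP : μ ∈ P := by
      by_contra h
      exact hne (hgenbot μ h)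
    have hklt : kf μ < k := by
      by_contra hge
      exact hnle (le_trans (hkey μ) (nPow_antitone (not_lt.mp hge)))
    exact Finset.mem_coe.mpr (Finset.mem_biUnion.mpr
      ⟨kf μ, Finset.mem_range.mpr hklt, hkfQ μ hμP⟩)
  refine ⟨hSk, ?_⟩
  -- vanishing of weight spaces deep in the filtration
  obtain ⟨H₀, hH₀⟩ := hH₀
  set r : Module.Dual ℂ a → ℝ := fun μ => (μ H₀).re with hrdef
  have hradd : ∀ μ ν : Module.Dual ℂ a, r (μ + ν) = r μ + r ν := by
    intro μ ν
    simp [hrdef, Complex.add_re]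
  obtain ⟨δ, hδpos, hδle⟩ : ∃ δ : ℝ, 0 < δ ∧ ∀ α ∈ Φ, δ ≤ r α := by
    by_cases hΦ : Φ.Nonempty
    · refine ⟨Φ.inf' hΦ r, ?_, fun α hα => Finset.inf'_le r hα⟩
      obtain ⟨α₀, hα₀, heq⟩ := Finset.exists_mem_eq_inf' hΦ r
      rw [heq]
      exact hH₀ α₀ hα₀
    · exact ⟨1, one_pos, fun α hα => absurd ⟨α, hα⟩ hΦ⟩
  have hQ_lb : ∀ m, ∀ τ ∈ Q m, ∃ ν₀ ∈ F, r ν₀ ≤ r τ := by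
    intro m
    induction m with
    | zero => exact fun τ hτ => ⟨τ, hτ, le_refl _⟩
    | succ m ih =>
      intro τ hτ
      rw [hQsucc, Finset.mem_union] at hτ
      rcases hτ with h | h
      · exact ih τ h
      · obtain ⟨α, hα, ν, hν, rfl⟩ := Finset.mem_image₂.mp h
        obtain ⟨ν₀, hν₀, hle⟩ := ih ν hν
        have h1 : 0 < r α := hH₀ α hα
        have h2 : r (α + ν) = r α + r ν := hradd α ν
        exact ⟨ν₀, hν₀, by linarith⟩
  set Padd : ℕ → Set (Module.Dual ℂ a) :=
    fun k => Nat.rec P (fun _ Pk => Set.image2 (fun α ν => α + ν) ↑Φ Pk) k with hPadddef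
  have hPadd0 : Padd 0 = P := rfl
  have hPaddsucc : ∀ k, Padd (k + 1) = Set.image2 (fun α ν => α + ν) ↑Φ (Padd k) :=
    fun _ => rfl
  have hnPow_le : ∀ k, nPowU b n U k ≤ ⨆ ν, Cif (Padd k) ν := by
    intro k
    induction k with
    | zero =>
      rw [show Padd 0 = P from rfl]
      exact le_of_eq hZP.symm
    | succ k ih =>
      rw [show nPowU b n U (k + 1) = Submodule.span ℂ
        {z | ∃ x ∈ n, ∃ u ∈ nPowU b n U k, z = ⁅x, u⁆} from rfl, Submodule.span_le]
      rintro z ⟨x, hx, u, hu, rfl⟩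
      refine lie_mem_iSup hwtsup (Cif (Padd k)) (Cif (Padd (k + 1))) ?_ x hx u (ih hu)
      intro α hα ν x' hx' u' hu'
      by_cases hν : ν ∈ Padd k
      · have hu'' : u' ∈ genWt b a U ν := by simpa [Cif, hν] using hu'
        have hαν : (α + ν) ∈ Padd (k + 1) := by
          rw [hPaddsucc]
          exact Set.mem_image2_of_mem (Finset.mem_coe.mpr hα) hν
        exact Submodule.mem_iSup_of_mem (α + ν)
          (by simpa [Cif, hαν] using lie_genWt_mem hx' hu'')
      · have hz : u' = 0 := by simpa [Cif, hν] using hu'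
        rw [hz, lie_zero]
        exact Submodule.zero_mem _
  have hPadd_lb : ∀ k, ∀ ν ∈ Padd k, ∃ τ ∈ P, r τ + k * δ ≤ r ν := by
    intro k
    induction k with
    | zero => exact fun ν hν => ⟨ν, hν, by simp⟩
    | succ k ih =>
      intro ν hν
      rw [hPaddsucc] at hν
      obtain ⟨α, hα, ν', hν', rfl⟩ := hν
      obtain ⟨τ, hτ, hle⟩ := ih ν' hν'
      have h1 : δ ≤ r α := hδle α (Finset.mem_coe.mp hα)
      have h2 : r (α + ν') = r α + r ν' := hradd α ν'
      refine ⟨τ, hτ, ?_⟩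
      push_cast
      rw [h2]
      linarith
  intro μ
  by_cases hμbot : genWt b a U μ = ⊥
  · exact ⟨0, by rw [hμbot, bot_inf_eq]⟩
  · have hμP : μ ∈ P := by
      by_contra h
      exact hμbot (hgenbot μ h)
    obtain ⟨m, hm⟩ := (hPQ μ).mp hμP
    obtain ⟨ν₀, hν₀F, _⟩ := hQ_lb m μ hm
    have hFne : F.Nonempty := ⟨ν₀, hν₀F⟩
    set B := F.inf' hFne r with hBdef
    obtain ⟨K, hK⟩ := exists_nat_gt ((r μ - B) / δ)
    refine ⟨K, ?_⟩
    rw [eq_bot_iff]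
    rintro v hv
    obtain ⟨hv1, hv2⟩ := Submodule.mem_inf.mp hv
    have hvA : v ∈ ⨆ ν, Cif (Padd K) ν := hnPow_le K hv2
    have hμA : μ ∉ Padd K := by
      intro hmem
      obtain ⟨τ, hτ, hle⟩ := hPadd_lb K μ hmem
      obtain ⟨m', hm'⟩ := (hPQ τ).mp hτ
      obtain ⟨ν₀', hν₀', hle2⟩ := hQ_lb m' τ hm'
      have hB : B ≤ r ν₀' := Finset.inf'_le r hν₀'
      have hKδ : r μ - B < K * δ := by
        rw [div_lt_iff₀ hδpos] at hK
        linarith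
      linarith
    have := mem_piece_of_mem_iSup hab (Cif (Padd K)) (hCif_le (Padd K)) hv1 hvA
    rw [Submodule.mem_bot]
    simpa [Cif, hμA] using this

end Aux

open Jb in
/-- Let `𝔟 = 𝔞 ⊕ 𝔫` be as in the paper and let `U` be a `𝔟`-module,
finitely generated over `U(𝔫)`, all of whose elements are `𝔞`-finite.  Then `U` is the
direct sum of its generalized weight spaces `U_μ`, each set
`S_k = {μ : U_μ ≠ 0, U_μ ⊄ 𝔫^kU}` is finite, and the linear map
`φ : ∏_μ U_μ → lim_k U/𝔫^kU`, `(x_μ)_μ ↦ ((Σ_{μ ∈ S_k} x_μ) mod 𝔫^kU)_k`,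
is a well-defined linear isomorphism. -/
theorem weight_decomposition_and_completion
    (b : Type*) [LieRing b] [LieAlgebra ℂ b] [FiniteDimensional ℂ b]
    (a n : LieSubalgebra ℂ b)
    (hab : IsLieAbelian a)
    (hideal : ∀ x : b, ∀ y ∈ n, ⁅x, y⁆ ∈ n)
    (hnilp : LieRing.IsNilpotent n)
    (hdisj : a.toSubmodule ⊓ n.toSubmodule = ⊥)
    (hsup : a.toSubmodule ⊔ n.toSubmodule = ⊤)
    (Φ : Finset (Module.Dual ℂ a)) (hΦ0 : (0 : Module.Dual ℂ a) ∉ Φ)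
    (hwtsup : n.toSubmodule = ⨆ α ∈ Φ, wtSpace b a n α)
    (hwtindep : iSupIndep fun α : Φ => wtSpace b a n α)
    (hH₀ : ∃ H : a, ∀ α ∈ Φ, 0 < ((α : Module.Dual ℂ a) H).re)
    (U : Type*) [AddCommGroup U] [Module ℂ U]
    [LieRingModule b U] [LieModule ℂ b U]
    (hfg : FGOverN b n U)
    (hafin : ∀ u : U, u ∈ aFinite b a U) :
    (iSupIndep fun μ : Module.Dual ℂ a => genWt b a U μ) ∧
    (⨆ μ : Module.Dual ℂ a, genWt b a U μ) = ⊤ ∧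
    (∀ k, (Sk b a n U k).Finite) ∧
    ∀ hfin : ∀ k, (Sk b a n U k).Finite,
      ∃ φ : (∀ μ : Module.Dual ℂ a, genWt b a U μ) ≃ₗ[ℂ] limU b n U,
        ∀ (x : ∀ μ : Module.Dual ℂ a, genWt b a U μ) (k : ℕ),
          ((φ x : limU b n U) : ∀ j, U ⧸ nPowU b n U j) k
            = Submodule.Quotient.mk (∑ μ ∈ (hfin k).toFinset, (x μ : U)) := by
  classical
  have hind := indep_genWt (U := U) hab
  have htop := sup_genWt_top hab hafin
  obtain ⟨hSkfin, hvanish⟩ := core hab hideal hwtsup hH₀ hfg hafin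
  refine ⟨hind, htop, hSkfin, ?_⟩
  intro hfin
  -- basic facts about the finsets S_k
  have hSkF : ∀ k μ, μ ∈ (hfin k).toFinset ↔ μ ∈ Sk b a n U k :=
    fun k μ => Set.Finite.mem_toFinset _
  have hSk_mono : ∀ k, (hfin k).toFinset ⊆ (hfin (k + 1)).toFinset := by
    intro k μ hμ
    rw [hSkF] at hμ ⊢
    exact ⟨hμ.1, fun hle => hμ.2 (le_trans hle (nPowU_succ_le b n U k))⟩
  have hout : ∀ k μ, μ ∉ (hfin k).toFinset → (∀ v ∈ genWt b a U μ, v ∈ nPowU b n U k) := by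
    intro k μ hμ v hv
    rw [hSkF] at hμ
    by_cases hbot : genWt b a U μ = ⊥
    · have hz : v = 0 := by
        simpa using (Submodule.eq_bot_iff _).mp hbot v hv
      rw [hz]
      exact Submodule.zero_mem _
    · have hle : genWt b a U μ ≤ nPowU b n U k := by
        by_contra hn
        exact hμ ⟨hbot, hn⟩
      exact hle hv
  -- the underlying map
  have hψlim : ∀ x : ∀ μ : Module.Dual ℂ a, genWt b a U μ,
      (fun k => (Submodule.Quotient.mk (∑ μ ∈ (hfin k).toFinset, (x μ : U)) :
        U ⧸ nPowU b n U k)) ∈ limU b n U := by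
    intro x k
    show transU b n U k (Submodule.Quotient.mk _) = Submodule.Quotient.mk _
    rw [transU, Submodule.mapQ_apply]
    rw [Submodule.Quotient.eq]
    rw [← Finset.sum_sdiff (hSk_mono k)]
    simp only [LinearMap.id_coe, id_eq, add_sub_cancel_right]
    refine Submodule.sum_mem _ fun μ hμ => ?_
    rw [Finset.mem_sdiff] at hμ
    exact hout k μ hμ.2 _ (x μ).2
  let Φm : (∀ μ : Module.Dual ℂ a, genWt b a U μ) →ₗ[ℂ] limU b n U :=
    { toFun := fun x => ⟨_, hψlim x⟩
      map_add' := fun x y => by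
        apply Subtype.ext
        funext k
        simp [Finset.sum_add_distrib]
      map_smul' := fun c x => by
        apply Subtype.ext
        funext k
        simp [Finset.smul_sum]
        rw [← Submodule.Quotient.mk_smul, Finset.smul_sum] }
  have hΦm_apply : ∀ x k, ((Φm x : limU b n U) : ∀ j, U ⧸ nPowU b n U j) k
      = Submodule.Quotient.mk (∑ μ ∈ (hfin k).toFinset, (x μ : U)) := fun x k => rfl
  -- injectivity
  have hinj : Function.Injective Φm := by
    rw [← LinearMap.ker_eq_bot, eq_bot_iff]
    intro x hx
    rw [LinearMap.mem_ker] at hx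
    have hx' : ∀ k, (∑ μ ∈ (hfin k).toFinset, (x μ : U)) ∈ nPowU b n U k := by
      intro k
      rw [← Submodule.Quotient.mk_eq_zero]
      have h2 := (hΦm_apply x k).symm
      rw [hx] at h2
      exact h2.trans rfl
    rw [Submodule.mem_bot]
    funext μ
    show x μ = 0
    by_cases hbot : genWt b a U μ = ⊥
    · exact Subtype.ext ((Submodule.eq_bot_iff _).mp hbot _ (x μ).2)
    · obtain ⟨K, hK⟩ := hvanish μ
      apply Subtype.ext
      show (x μ : U) = 0
      have hall : ∀ k, (x μ : U) ∈ nPowU b n U k := by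
        intro k
        by_cases hμk : μ ∈ (hfin k).toFinset
        · have hdec := nPow_decomp hab hideal hafin k (hx' k)
          obtain ⟨s, z, hz, hzs, hzsum⟩ := exists_finset_sum _ hdec
          have huniq := components_unique hab ((hfin k).toFinset) s
            (fun ν => if ν ∈ (hfin k).toFinset then (x ν : U) else 0) z
            (fun ν => by
              by_cases h : ν ∈ (hfin k).toFinset
              · simpa [h] using (x ν).2
              · simp [h])
            (fun ν => (hz ν).2)
            (fun ν hν => if_neg hν)
            hzs
            (by
              rw [Finset.sum_congr rfl (fun ν hν => if_pos hν), hzsum])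
          have heq := congrFun huniq μ
          rw [if_pos hμk] at heq
          rw [heq]
          exact (hz μ).1
        · exact hout k μ hμk _ (x μ).2
      have : (x μ : U) ∈ genWt b a U μ ⊓ nPowU b n U K :=
        Submodule.mem_inf.mpr ⟨(x μ).2, hall K⟩
      rw [hK] at this
      simpa using this
  -- surjectivity
  have hsurj : Function.Surjective Φm := by
    rintro ⟨fv, hfv⟩
    choose u hu using fun k => Submodule.Quotient.mk_surjective (nPowU b n U k) (fv k)
    have hdiff : ∀ k, u (k + 1) - u k ∈ nPowU b n U k := by
      intro k
      rw [← Submodule.Quotient.eq]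
      have h1 := hfv k
      rw [← hu (k + 1), ← hu k] at h1
      rw [← h1, transU, Submodule.mapQ_apply]
      rfl
    have hdiff' : ∀ k l, k ≤ l → u l - u k ∈ nPowU b n U k := by
      intro k l hkl
      induction l, hkl using Nat.le_induction with
      | base => rw [sub_self]; exact Submodule.zero_mem _
      | succ l hkl ih =>
        have : u (l + 1) - u k = (u (l + 1) - u l) + (u l - u k) :=
          (sub_add_sub_cancel _ _ _).symm
        rw [this]
        exact Submodule.add_mem _ (nPow_antitone hkl (hdiff l)) ih
    have hdeck : ∀ k, u k ∈ ⨆ ν : Module.Dual ℂ a, genWt b a U ν := by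
      intro k; rw [htop]; trivial
    choose s y hy hys hsum using fun k =>
      exists_finset_sum (fun ν : Module.Dual ℂ a => genWt b a U ν) (hdeck k)
    have hstab : ∀ k l, k ≤ l → ∀ μ, y l μ - y k μ ∈ nPowU b n U k := by
      intro k l hkl
      have hdec := nPow_decomp hab hideal hafin k (hdiff' k l hkl)
      obtain ⟨t, z, hz, hzt, hzsum⟩ := exists_finset_sum _ hdec
      have hsums : ∑ μ ∈ s l ∪ s k, (y l μ - y k μ) = ∑ μ ∈ t, z μ := by
        rw [Finset.sum_sub_distrib,
          ← Finset.sum_subset (Finset.subset_union_left (s₂ := s k))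
            (fun μ _ hμ => hys l μ hμ),
          ← Finset.sum_subset (Finset.subset_union_right (s₁ := s l))
            (fun μ _ hμ => hys k μ hμ),
          hsum l, hsum k, hzsum]
      have huniq := components_unique hab (s l ∪ s k) t
        (fun μ => y l μ - y k μ) z
        (fun μ => Submodule.sub_mem _ (hy l μ) (hy k μ))
        (fun μ => (hz μ).2)
        (fun μ hμ => by
          rw [Finset.mem_union, not_or] at hμ
          show y l μ - y k μ = 0
          rw [hys l μ hμ.1, hys k μ hμ.2, sub_self])
        hzt hsums
      intro μ
      rw [show y l μ - y k μ = z μ from congrFun huniq μ]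
      exact (hz μ).1
    choose K hK using hvanish
    refine ⟨fun μ => ⟨y (K μ) μ, hy (K μ) μ⟩, ?_⟩
    have hxk : ∀ k μ, y (K μ) μ - y k μ ∈ nPowU b n U k := by
      intro k μ
      rcases le_total k (K μ) with h | h
      · exact hstab k (K μ) h μ
      · have h1 : y k μ - y (K μ) μ ∈ nPowU b n U (K μ) := hstab (K μ) k h μ
        have h2 : y k μ - y (K μ) μ ∈ genWt b a U μ :=
          Submodule.sub_mem _ (hy k μ) (hy (K μ) μ)
        have h3 : y k μ - y (K μ) μ = 0 := by
          have := Submodule.mem_inf.mpr ⟨h2, h1⟩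
          rw [hK μ] at this
          simpa using this
        have : y (K μ) μ - y k μ = 0 := by
          rw [← neg_sub, h3, neg_zero]
        rw [this]
        exact Submodule.zero_mem _
    apply Subtype.ext
    funext k
    show Submodule.Quotient.mk _ = fv k
    rw [← hu k, Submodule.Quotient.eq]
    have hu_eq : u k = ∑ μ ∈ (hfin k).toFinset ∪ s k, y k μ := by
      rw [← Finset.sum_subset (Finset.subset_union_right (s₁ := (hfin k).toFinset))
        (fun μ _ hμ => hys k μ hμ), hsum k]
    have hx_eq : ∑ μ ∈ (hfin k).toFinset, y (K μ) μ
        = ∑ μ ∈ (hfin k).toFinset ∪ s k,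
            (if μ ∈ (hfin k).toFinset then y (K μ) μ else 0) := by
      rw [← Finset.sum_subset (Finset.subset_union_left (s₂ := s k))
        (fun μ _ hμ => if_neg hμ)]
      exact Finset.sum_congr rfl (fun μ hμ => (if_pos hμ).symm)
    show (∑ μ ∈ (hfin k).toFinset, y (K μ) μ) - u k ∈ nPowU b n U k
    rw [hx_eq, hu_eq, ← Finset.sum_sub_distrib]
    refine Submodule.sum_mem _ fun μ hμ => ?_
    by_cases h : μ ∈ (hfin k).toFinset
    · rw [if_pos h]
      exact hxk k μ
    · rw [if_neg h, zero_sub]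
      exact Submodule.neg_mem _ (hout k μ h _ (hy k μ))
  exact ⟨LinearEquiv.ofBijective Φm ⟨hinj, hsurj⟩, fun x k => rfl⟩
end

section
/- Let U be a 𝔟-module which is finitely generated as a U(𝔫)-module and all of whose elements are 𝔞-finite. Then for every μ ∈ 𝔞* there exists a positive integer k such that 𝔫^kU ∩ U_μ = 0. -/
set_option maxHeartbeats 1000000
set_option synthInstance.maxHeartbeats 400000

section Aux

variable {M : Type*} [AddCommGroup M] [Module ℂ M]

lemma mem_maxGen_of_eig {f : Module.End ℂ M} {μ : ℂ} {x : M} (h : f x = μ • x) :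
    x ∈ f.maxGenEigenspace μ := by
  rw [Module.End.mem_maxGenEigenspace]
  exact ⟨1, by simp [h]⟩

lemma coe_restrict_sub {f : Module.End ℂ M} {W : Submodule ℂ M}
    (hW : ∀ x ∈ W, f x ∈ W) (μ : ℂ) (z : W) :
    ((((f.restrict hW) - μ • (1 : Module.End ℂ W)) z : W) : M)
      = (f - μ • (1 : Module.End ℂ M)) (z : M) := by
  simp [LinearMap.sub_apply]

lemma coe_restrict_pow_sub {f : Module.End ℂ M} {W : Submodule ℂ M}
    (hW : ∀ x ∈ W, f x ∈ W) (μ : ℂ) (k : ℕ) (w : W) :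
    (((((f.restrict hW) - μ • (1 : Module.End ℂ W)) ^ k) w : W) : M)
      = ((f - μ • (1 : Module.End ℂ M)) ^ k) (w : M) := by
  induction k with
  | zero => simp
  | succ k ih =>
      rw [pow_succ', pow_succ', Module.End.mul_apply, Module.End.mul_apply,
        coe_restrict_sub, ih]

end Aux

open Jb in
/-- Let `𝔟 = 𝔞 ⊕ 𝔫` be as in the paper and let `U` be a `𝔟`-module,
finitely generated over `U(𝔫)`, all of whose elements are `𝔞`-finite.  Then for every
`μ ∈ 𝔞*` there is a positive integer `k` with `𝔫^kU ∩ U_μ = 0`. -/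
theorem nPow_inter_genWt_eq_bot
    (b : Type*) [LieRing b] [LieAlgebra ℂ b] [FiniteDimensional ℂ b]
    (a n : LieSubalgebra ℂ b)
    (hab : IsLieAbelian a)
    (hideal : ∀ x : b, ∀ y ∈ n, ⁅x, y⁆ ∈ n)
    (hnilp : LieRing.IsNilpotent n)
    (hdisj : a.toSubmodule ⊓ n.toSubmodule = ⊥)
    (hsup : a.toSubmodule ⊔ n.toSubmodule = ⊤)
    (Φ : Finset (Module.Dual ℂ a)) (hΦ0 : (0 : Module.Dual ℂ a) ∉ Φ)
    (hwtsup : n.toSubmodule = ⨆ α ∈ Φ, wtSpace b a n α)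
    (hwtindep : iSupIndep fun α : Φ => wtSpace b a n α)
    (hH₀ : ∃ H : a, ∀ α ∈ Φ, 0 < ((α : Module.Dual ℂ a) H).re)
    (U : Type*) [AddCommGroup U] [Module ℂ U]
    [LieRingModule b U] [LieModule ℂ b U]
    (hfg : FGOverN b n U)
    (hafin : ∀ u : U, u ∈ aFinite b a U) :
    ∀ μ : Module.Dual ℂ a, ∃ k : ℕ, 0 < k ∧
      nPowU b n U k ⊓ genWt b a U μ = ⊥ := by
  classical
  intro μ
  obtain ⟨H₀, hH₀⟩ := hH₀
  set f : Module.End ℂ U := LieModule.toEnd ℂ b U (H₀ : b) with hf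
  -- the positive constant c
  set c : ℝ := if h : Φ.Nonempty then
      (Φ.image fun α : Module.Dual ℂ a => ((α : Module.Dual ℂ a) H₀).re).min' (h.image _)
    else 1 with hc
  have hc0 : 0 < c := by
    rw [hc]
    split_ifs with h
    · obtain ⟨α, hα, hαeq⟩ := Finset.mem_image.mp
        ((Φ.image fun α : Module.Dual ℂ a => ((α : Module.Dual ℂ a) H₀).re).min'_mem (h.image _))
      rw [← hαeq]
      exact hH₀ α hα
    · norm_num
  have hcle : ∀ α ∈ Φ, c ≤ ((α : Module.Dual ℂ a) H₀).re := by
    intro α hα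
    rw [hc]
    rw [dif_pos ⟨α, hα⟩]
    exact Finset.min'_le _ _ (Finset.mem_image_of_mem _ hα)
  -- the filtration by real parts
  set E : ℝ → Submodule ℂ U :=
    fun r => ⨆ (χ : ℂ) (_ : r ≤ χ.re), f.maxGenEigenspace χ with hE
  have hEmono : ∀ {r r' : ℝ}, r ≤ r' → E r' ≤ E r := by
    intro r r' h
    exact iSup₂_le fun χ hχ => le_iSup₂ (f := fun (χ : ℂ) (_ : r ≤ χ.re) =>
      f.maxGenEigenspace χ) χ (h.trans hχ)
  -- bracketing with n raises the filtration
  have hbr : ∀ (r : ℝ), ∀ x ∈ n, ∀ v ∈ E r, ⁅x, v⁆ ∈ E (r + c) := by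
    intro r x hx v hv
    let φ : b →ₗ[ℂ] U :=
      { toFun := fun y => ⁅y, v⁆
        map_add' := fun y z => add_lie y z v
        map_smul' := fun t y => smul_lie t y v }
    have key : n.toSubmodule ≤ Submodule.comap φ (E (r + c)) := by
      rw [hwtsup]
      refine iSup₂_le fun α hα => ?_
      intro y hy
      have hy2 : ∀ H : a, ⁅(H : b), y⁆ = (α : Module.Dual ℂ a) H • y := hy.2
      have hEy : E r ≤ Submodule.comap (LieModule.toEnd ℂ b U y) (E (r + c)) := by
        refine iSup₂_le fun χ hχ => ?_
        intro w hw
        have hyα : y ∈ (LieModule.toEnd ℂ b b (H₀ : b)).maxGenEigenspace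
            ((α : Module.Dual ℂ a) H₀) :=
          mem_maxGen_of_eig (by
            rw [LieModule.toEnd_apply_apply]
            exact hy2 H₀)
        have hmem := LieModule.lie_mem_maxGenEigenspace_toEnd hyα hw
        refine Submodule.mem_comap.2 ?_
        rw [LieModule.toEnd_apply_apply]
        have hre : r + c ≤ ((α : Module.Dual ℂ a) H₀ + χ).re := by
          rw [Complex.add_re]
          have := hcle α hα
          linarith
        exact le_iSup₂ (f := fun (χ : ℂ) (_ : r + c ≤ χ.re) => f.maxGenEigenspace χ)
          ((α : Module.Dual ℂ a) H₀ + χ) hre hmem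
      have := hEy hv
      rw [Submodule.mem_comap, LieModule.toEnd_apply_apply] at this
      exact this
    exact key hx
  -- the finite-dimensional a-stable subspace generated by the generators
  obtain ⟨S, hS⟩ := hfg
  choose Nb hNb using hafin
  haveI : ∀ u : U, FiniteDimensional ℂ (Nb u) := fun u => (hNb u).2.1
  set W : Submodule ℂ U := S.sup Nb with hW
  haveI : FiniteDimensional ℂ W := Submodule.finiteDimensional_finset_sup S Nb
  have hWstab : ∀ x ∈ W, f x ∈ W := by
    have hle : W ≤ Submodule.comap f W := by
      rw [hW]
      refine Finset.sup_le fun s hs => ?_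
      intro v hv
      refine Submodule.mem_comap.2 ?_
      rw [hf, LieModule.toEnd_apply_apply]
      exact Finset.le_sup (f := Nb) hs ((hNb s).2.2 H₀ v hv)
    exact fun x hx => hle hx
  set g : Module.End ℂ W := f.restrict hWstab with hg
  set Ev : Finset ℂ := g.finite_hasEigenvalue.toFinset with hEv
  set reS : Finset ℝ := Ev.image Complex.re with hreS
  set m : ℝ := if h : reS.Nonempty then reS.min' h else 0 with hm
  -- every generator lies in E m
  have hSm : ∀ s ∈ S, s ∈ E m := by
    intro s hs
    have hsW : s ∈ W := Finset.le_sup (f := Nb) hs ((hNb s).1)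
    have htop : (⟨s, hsW⟩ : W) ∈ ⨆ χ : ℂ, g.maxGenEigenspace χ := by
      rw [Module.End.iSup_maxGenEigenspace_eq_top g]
      exact Submodule.mem_top
    have : ((⟨s, hsW⟩ : W) : U) ∈ E m := by
      refine Submodule.iSup_induction (motive := fun w : W => (w : U) ∈ E m) _ htop ?_ ?_ ?_
      · intro χ w hw
        by_cases hw0 : w = 0
        · subst hw0; simpa using (E m).zero_mem
        · obtain ⟨j, hj⟩ := (Module.End.mem_maxGenEigenspace g χ w).mp hw
          have heig : g.HasEigenvalue χ := by
            refine Module.End.hasEigenvalue_of_hasGenEigenvalue (k := j) ?_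
            rw [Module.End.hasGenEigenvalue_iff]
            refine Submodule.ne_bot_iff _ |>.2 ⟨w, ?_, hw0⟩
            rw [Module.End.mem_genEigenspace_nat]
            exact hj
          have hχEv : χ ∈ Ev := by
            rw [hEv, Set.Finite.mem_toFinset]
            exact heig
          have hmle : m ≤ χ.re := by
            have hne : reS.Nonempty := ⟨χ.re, Finset.mem_image_of_mem _ hχEv⟩
            rw [hm, dif_pos hne]
            exact Finset.min'_le _ _ (Finset.mem_image_of_mem _ hχEv)
          have hwf : (w : U) ∈ f.maxGenEigenspace χ := by
            rw [Module.End.mem_maxGenEigenspace]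
            refine ⟨j, ?_⟩
            rw [← coe_restrict_pow_sub hWstab χ j w, hj, Submodule.coe_zero]
          exact le_iSup₂ (f := fun (χ : ℂ) (_ : m ≤ χ.re) => f.maxGenEigenspace χ)
            χ hmle hwf
      · simpa using (E m).zero_mem
      · intro x y hx hy
        rw [Submodule.coe_add]
        exact (E m).add_mem hx hy
    exact this
  -- E m is everything
  have hEtop : E m = ⊤ := by
    refine hS (E m) (fun s hs => hSm s (Finset.mem_coe.mp hs)) ?_
    intro x hx u hu
    exact hEmono (le_add_of_nonneg_right hc0.le) (hbr m x hx u hu)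
  -- the filtration bound for nPowU
  have hnk : ∀ k : ℕ, nPowU b n U k ≤ E (m + k * c) := by
    intro k
    induction k with
    | zero =>
        have : m + (0 : ℕ) * c = m := by push_cast; ring
        rw [this, hEtop]
        exact le_top
    | succ k ih =>
        have heq : m + ((k + 1 : ℕ) : ℝ) * c = (m + (k : ℕ) * c) + c := by
          push_cast; ring
        rw [heq]
        show Submodule.span ℂ {z | ∃ x ∈ n, ∃ u ∈ nPowU b n U k, z = ⁅x, u⁆}
          ≤ E (m + (k : ℕ) * c + c)
        rw [Submodule.span_le]
        rintro z ⟨x, hx, u, hu, rfl⟩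
        exact hbr _ x hx u (ih hu)
  -- choose k
  obtain ⟨k, hk⟩ := exists_nat_gt (max 0 (((μ H₀).re - m) / c))
  have hkpos : 0 < k := by
    have : (0 : ℝ) < k := lt_of_le_of_lt (le_max_left _ _) hk
    exact_mod_cast this
  have hbig : (μ H₀).re < m + k * c := by
    have h1 : ((μ H₀).re - m) / c < k := lt_of_le_of_lt (le_max_right _ _) hk
    have h2 : (μ H₀).re - m < k * c := (div_lt_iff₀ hc0).mp h1
    linarith
  refine ⟨k, hkpos, ?_⟩
  -- disjointness
  have hgen : genWt b a U μ ≤ f.maxGenEigenspace (μ H₀) := by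
    exact iInf_le (fun H : a => Module.End.maxGenEigenspace
      (LieModule.toEnd ℂ b U (H : b)) (μ H)) H₀
  have hEle : E (m + k * c) ≤ ⨆ (χ : ℂ) (_ : χ ≠ μ H₀), f.maxGenEigenspace χ := by
    refine iSup₂_le fun χ hχ => ?_
    have hne : χ ≠ μ H₀ := by
      intro h
      rw [h] at hχ
      linarith
    exact le_iSup₂ (f := fun (χ : ℂ) (_ : χ ≠ μ H₀) => f.maxGenEigenspace χ) χ hne
  have hdisj2 : Disjoint (nPowU b n U k) (genWt b a U μ) := by
    have := (Module.End.independent_maxGenEigenspace f) (μ H₀)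
    exact ((this.mono_right hEle).symm).mono (hnk k) hgen
  exact disjoint_iff.mp hdisj2
end

section
/- Let r ≥ 1, λ ∈ ℂ, and Q₀, R ∈ M_r(ℂ) with Q₀ upper triangular. Then there exist matrices L, T ∈ M_r(ℂ) such that λL − (Q₀L − LQ₀) = T + R, and T_{ij} = 0 whenever (Q₀)_{ii} − (Q₀)_{jj} ≠ λ. -/
/-- Fueled recursion constructing the matrix `L`. -/
noncomputable def auxL (r : ℕ) (lam : ℂ) (Q₀ R : Matrix (Fin r) (Fin r) ℂ) :
    ℕ → Fin r → Fin r → ℂ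
  | 0 => fun _ _ => 0
  | (n+1) => fun i j =>
      let c := lam - Q₀ i i + Q₀ j j
      if c = 0 then 0 else
        (R i j + ∑ k, (if i < k then Q₀ i k * auxL r lam Q₀ R n k j else 0)
               - ∑ k, (if k < j then auxL r lam Q₀ R n i k * Q₀ k j else 0)) / c

/-- The measure: strictly decreases in `i` direction and `j` direction as needed. -/
def mMeas (r : ℕ) (i j : Fin r) : ℕ := (j : ℕ) + (r - (i : ℕ))

lemma mMeas_pos (r : ℕ) (i j : Fin r) : 1 ≤ mMeas r i j := by
  have : (i : ℕ) < r := i.isLt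
  unfold mMeas; omega

lemma auxL_stable (r : ℕ) (lam : ℂ) (Q₀ R : Matrix (Fin r) (Fin r) ℂ) :
    ∀ n : ℕ, ∀ i j : Fin r, ∀ a b : ℕ, mMeas r i j ≤ n →
      mMeas r i j ≤ a → mMeas r i j ≤ b →
      auxL r lam Q₀ R a i j = auxL r lam Q₀ R b i j := by
  intro n
  induction n with
  | zero => intro i j a b hn _ _; exact absurd (le_trans (mMeas_pos r i j) hn) (by omega)
  | succ n ih =>
    intro i j a b hn ha hb
    have h1 := mMeas_pos r i j
    obtain ⟨a', rfl⟩ : ∃ a', a = a' + 1 := ⟨a - 1, by omega⟩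
    obtain ⟨b', rfl⟩ : ∃ b', b = b' + 1 := ⟨b - 1, by omega⟩
    show auxL r lam Q₀ R (a'+1) i j = auxL r lam Q₀ R (b'+1) i j
    simp only [auxL]
    by_cases hc : lam - Q₀ i i + Q₀ j j = 0
    · simp [hc]
    · simp only [hc, if_false]
      congr 2
      · congr 1
        apply Finset.sum_congr rfl
        intro k _
        by_cases hk : i < k
        · simp only [hk, if_true]
          have hm : mMeas r k j ≤ mMeas r i j - 1 := by
            unfold mMeas
            have := Fin.lt_iff_val_lt_val.mp hk
            have := k.isLt
            omega
          rw [ih k j a' b' (by omega) (by omega) (by omega)]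
        · simp [hk]
      · apply Finset.sum_congr rfl
        intro k _
        by_cases hk : k < j
        · simp only [hk, if_true]
          have hm : mMeas r i k ≤ mMeas r i j - 1 := by
            unfold mMeas
            have := Fin.lt_iff_val_lt_val.mp hk
            omega
          rw [ih i k a' b' (by omega) (by omega) (by omega)]
        · simp [hk]

/-- Let `r ≥ 1`, `λ ∈ ℂ`, and `Q₀, R ∈ M_r(ℂ)` with `Q₀` upper
triangular.  Then there exist matrices `L, T ∈ M_r(ℂ)` such that
`λ·L − (Q₀L − LQ₀) = T + R`, and `T i j = 0` whenever `(Q₀)ᵢᵢ − (Q₀)ⱼⱼ ≠ λ`. -/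
theorem exists_L_T_of_upper_triangular
    (r : ℕ) (hr : 1 ≤ r) (lam : ℂ) (Q₀ R : Matrix (Fin r) (Fin r) ℂ)
    (hQ₀ : ∀ i j : Fin r, j < i → Q₀ i j = 0) :
    ∃ L T : Matrix (Fin r) (Fin r) ℂ,
      lam • L - (Q₀ * L - L * Q₀) = T + R ∧
      ∀ i j : Fin r, Q₀ i i - Q₀ j j ≠ lam → T i j = 0 := by
  set L : Matrix (Fin r) (Fin r) ℂ :=
    Matrix.of (fun i j => auxL r lam Q₀ R (mMeas r i j) i j) with hL
  refine ⟨L, lam • L - (Q₀ * L - L * Q₀) - R, by abel, ?_⟩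
  intro i j hne
  have hc : lam - Q₀ i i + Q₀ j j ≠ 0 := by
    intro h; apply hne; linear_combination -h
  -- recurrence for L i j
  have hLrec : (lam - Q₀ i i + Q₀ j j) * L i j =
      R i j + ∑ k, (if i < k then Q₀ i k * L k j else 0)
            - ∑ k, (if k < j then L i k * Q₀ k j else 0) := by
    have h1 := mMeas_pos r i j
    obtain ⟨n, hn⟩ : ∃ n, mMeas r i j = n + 1 := ⟨mMeas r i j - 1, by omega⟩
    have : L i j = auxL r lam Q₀ R (n+1) i j := by rw [hL]; simp [hn]
    rw [this]
    simp only [auxL, hc, if_false]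
    rw [mul_comm, div_mul_cancel₀ _ hc]
    congr 2
    · congr 1
      funext k
      by_cases hk : i < k
      · simp only [hk, if_true]
        congr 1
        have hm : mMeas r k j ≤ n := by
          unfold mMeas at hn ⊢
          have := Fin.lt_iff_val_lt_val.mp hk
          have := k.isLt
          omega
        rw [hL]
        simp only [Matrix.of_apply]
        exact (auxL_stable r lam Q₀ R (mMeas r k j) k j (mMeas r k j) n le_rfl le_rfl hm).symm
      · simp [hk]
    · funext k
      by_cases hk : k < j
      · simp only [hk, if_true]
        congr 1
        have hm : mMeas r i k ≤ n := by
          unfold mMeas at hn ⊢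
          have := Fin.lt_iff_val_lt_val.mp hk
          omega
        rw [hL]
        simp only [Matrix.of_apply]
        exact (auxL_stable r lam Q₀ R (mMeas r i k) i k (mMeas r i k) n le_rfl le_rfl hm).symm
      · simp [hk]
  -- compute the residual entry
  simp only [Matrix.sub_apply, Matrix.smul_apply, Matrix.mul_apply, smul_eq_mul]
  -- split the sums using triangularity
  have hsplit1 : ∑ k, Q₀ i k * L k j
      = Q₀ i i * L i j + ∑ k, (if i < k then Q₀ i k * L k j else 0) := by
    rw [← Finset.sum_filter]
    rw [show Q₀ i i * L i j = ∑ k ∈ {i}, Q₀ i k * L k j by simp]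
    rw [← Finset.sum_union (by simp)]
    symm
    apply Finset.sum_subset
    · intro k _; simp
    · intro k _ hk
      simp only [Finset.mem_union, Finset.mem_singleton, Finset.mem_filter,
        Finset.mem_univ, true_and, not_or] at hk
      have : k < i := by
        rcases lt_trichotomy k i with h | h | h
        · exact h
        · exact absurd h hk.1
        · exact absurd h hk.2
      rw [hQ₀ i k this, zero_mul]
  have hsplit2 : ∑ k, L i k * Q₀ k j
      = L i j * Q₀ j j + ∑ k, (if k < j then L i k * Q₀ k j else 0) := by
    rw [← Finset.sum_filter]
    rw [show L i j * Q₀ j j = ∑ k ∈ {j}, L i k * Q₀ k j by simp]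
    rw [← Finset.sum_union (by simp)]
    symm
    apply Finset.sum_subset
    · intro k _; simp
    · intro k _ hk
      simp only [Finset.mem_union, Finset.mem_singleton, Finset.mem_filter,
        Finset.mem_univ, true_and, not_or] at hk
      have : j < k := by
        rcases lt_trichotomy k j with h | h | h
        · exact absurd h hk.2
        · exact absurd h hk.1
        · exact h
      rw [hQ₀ k j this, mul_zero]
  rw [hsplit1, hsplit2]
  linear_combination hLrec
end

section
/- R is a Noetherian ring. -/
open MvPolynomial

variable (m : ℕ) {A : Type*} [AddCommGroup A] (w : Fin m → A) (Λ : AddSubgroup A)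

/-- The subalgebra `R` of `R' = ℂ[x_1, …, x_m]` spanned (as a `ℂ`-subspace) by the
monomials `x^d` whose weight `Σ_i d_i · w(i)` lies in `Λ`. -/
noncomputable def weightedSubalgebra : Subalgebra ℂ (MvPolynomial (Fin m) ℂ) where
  carrier := (Submodule.span ℂ
    {p : MvPolynomial (Fin m) ℂ | ∃ d : Fin m →₀ ℕ, (∑ i, d i • w i) ∈ Λ ∧ p = monomial d (1 : ℂ)} : Set _)
  zero_mem' := Submodule.zero_mem _
  add_mem' := fun h₁ h₂ => Submodule.add_mem _ h₁ h₂
  one_mem' := by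
    refine Submodule.subset_span ⟨0, ?_, ?_⟩
    · simpa using Λ.zero_mem
    · simp
  mul_mem' := by
    intro p q hp hq
    induction hp, hq using Submodule.span_induction₂ with
    | mem_mem x y hx hy =>
        obtain ⟨d, hd, rfl⟩ := hx
        obtain ⟨e, he, rfl⟩ := hy
        refine Submodule.subset_span ⟨d + e, ?_, ?_⟩
        · simpa [Finsupp.add_apply, add_smul, Finset.sum_add_distrib] using Λ.add_mem hd he
        · simp [MvPolynomial.monomial_mul]
    | zero_left y hy => simpa using Submodule.zero_mem _
    | zero_right x hx => simpa using Submodule.zero_mem _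
    | add_left x y z hx hy hz h1 h2 => rw [add_mul]; exact Submodule.add_mem _ h1 h2
    | add_right x y z hx hy hz h1 h2 => rw [mul_add]; exact Submodule.add_mem _ h1 h2
    | smul_left r x y hx hy h => rw [smul_mul_assoc]; exact Submodule.smul_mem _ _ h
    | smul_right r x y hx hy h => rw [mul_smul_comm]; exact Submodule.smul_mem _ _ h
  algebraMap_mem' := fun c => by
    have : (algebraMap ℂ (MvPolynomial (Fin m) ℂ)) c = c • monomial 0 1 := by
      simp [Algebra.smul_def]
    rw [this]
    refine Submodule.smul_mem _ _ (Submodule.subset_span ⟨0, ?_, rfl⟩)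
    simpa using Λ.zero_mem

/-- Let `Λ` be a subgroup of an abelian group `A` and
`w : {1,…,m} → A` a weight function with `2·w(i) ∈ Λ` for all `i`.  Then the
subalgebra `R` of `R' = ℂ[x_1,…,x_m]` spanned by the monomials of weight in `Λ`
is a Noetherian ring. -/
theorem weightedSubalgebra_isNoetherianRing
    (m : ℕ) (hm : 1 ≤ m) {A : Type*} [AddCommGroup A] (w : Fin m → A)
    (Λ : AddSubgroup A) (hΛ : ∀ i : Fin m, 2 • w i ∈ Λ) :
    IsNoetherianRing (weightedSubalgebra m w Λ) := by
  classical
  -- the finite set of bounded-exponent monomials generating R as an algebra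
  set S : Set (Fin m →₀ ℕ) := {d | (∀ i, d i ≤ 2) ∧ (∑ i, d i • w i) ∈ Λ} with hS
  have hSfin : S.Finite := by
    have : S ⊆ Set.range (fun f : Fin m → Fin 3 =>
        (Finsupp.equivFunOnFinite.symm fun i => ((f i : ℕ)))) := by
      rintro d ⟨hb, -⟩
      refine ⟨fun i => ⟨d i, Nat.lt_succ_of_le (hb i)⟩, ?_⟩
      ext j
      simp [Finsupp.equivFunOnFinite]
    exact Set.Finite.subset (Set.finite_range _) this
  set G : Set (MvPolynomial (Fin m) ℂ) := (fun d => monomial d (1 : ℂ)) '' S with hG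
  have hGfin : G.Finite := hSfin.image _
  -- key: every monomial of weight in Λ lies in the adjoin of G
  have key : ∀ n (d : Fin m →₀ ℕ), (∑ i, d i) = n → (∑ i, d i • w i) ∈ Λ →
      monomial d (1 : ℂ) ∈ Algebra.adjoin ℂ G := by
    intro n
    induction n using Nat.strong_induction_on with
    | _ n ih =>
      intro d hdn hdΛ
      by_cases hb : ∀ i, d i ≤ 2
      · exact Algebra.subset_adjoin ⟨d, ⟨hb, hdΛ⟩, rfl⟩
      · push_neg at hb
        obtain ⟨i, hi⟩ := hb
        have hle : Finsupp.single i 2 ≤ d := Finsupp.single_le_iff.mpr (le_of_lt hi)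
        set d' : Fin m →₀ ℕ := d - Finsupp.single i 2 with hd'
        have hsplit : d' + Finsupp.single i 2 = d := tsub_add_cancel_of_le hle
        have hsingle_sum : (∑ j, (Finsupp.single i 2) j • w j) = 2 • w i := by
          rw [Finset.sum_eq_single i]
          · simp
          · intro b _ hb
            simp [Finsupp.single_apply, hb.symm]
          · simp
        have hsum : (∑ j, d j • w j) = (∑ j, d' j • w j) + 2 • w i := by
          rw [← hsingle_sum, ← Finset.sum_add_distrib]
          refine Finset.sum_congr rfl fun j _ => ?_
          rw [← add_smul, ← Finsupp.add_apply, hsplit]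
        have hw' : (∑ j, d' j • w j) ∈ Λ := by
          have : (∑ j, d' j • w j) = (∑ j, d j • w j) - 2 • w i := by
            rw [hsum]; abel
          rw [this]
          exact Λ.sub_mem hdΛ (hΛ i)
        have hdeg : (∑ j, d' j) < n := by
          have h2 : (∑ j, (Finsupp.single i 2) j) = 2 := by
            rw [Finset.sum_eq_single i]
            · simp
            · intro b _ hb; simp [Finsupp.single_apply, hb.symm]
            · simp
          have : (∑ j, d j) = (∑ j, d' j) + 2 := by
            rw [← h2, ← Finset.sum_add_distrib]
            refine Finset.sum_congr rfl fun j _ => ?_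
            rw [← Finsupp.add_apply, hsplit]
          omega
        have hgen : monomial (Finsupp.single i 2) (1 : ℂ) ∈ Algebra.adjoin ℂ G := by
          refine Algebra.subset_adjoin ⟨Finsupp.single i 2, ⟨?_, ?_⟩, rfl⟩
          · intro j
            rw [Finsupp.single_apply]
            split <;> omega
          · rw [hsingle_sum]; exact hΛ i
        have hrec : monomial d' (1 : ℂ) ∈ Algebra.adjoin ℂ G :=
          ih _ hdeg d' rfl hw'
        have h1 : monomial d (1 : ℂ) = monomial d' 1 * monomial (Finsupp.single i 2) 1 := by
          rw [monomial_mul, one_mul, hsplit]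
        rw [h1]
        exact mul_mem hrec hgen
  have hadj : Algebra.adjoin ℂ G = weightedSubalgebra m w Λ := by
    apply le_antisymm
    · rw [Algebra.adjoin_le_iff]
      rintro p ⟨d, hd, rfl⟩
      exact Submodule.subset_span ⟨d, hd.2, rfl⟩
    · intro p hp
      have hp' : p ∈ Submodule.span ℂ
          {p : MvPolynomial (Fin m) ℂ |
            ∃ d : Fin m →₀ ℕ, (∑ i, d i • w i) ∈ Λ ∧ p = monomial d (1 : ℂ)} := hp
      have hle : Submodule.span ℂ
          {p : MvPolynomial (Fin m) ℂ |
            ∃ d : Fin m →₀ ℕ, (∑ i, d i • w i) ∈ Λ ∧ p = monomial d (1 : ℂ)} ≤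
          Subalgebra.toSubmodule (Algebra.adjoin ℂ G) := by
        rw [Submodule.span_le]
        rintro q ⟨d, hd, rfl⟩
        exact key _ d rfl hd
      exact hle hp'
  have hfg : (weightedSubalgebra m w Λ).FG := by
    refine ⟨hGfin.toFinset, ?_⟩
    rw [Set.Finite.coe_toFinset, hadj]
  have : Algebra.FiniteType ℂ (weightedSubalgebra m w Λ) :=
    (Subalgebra.fg_iff_finiteType _).mp hfg
  exact Algebra.FiniteType.isNoetherianRing ℂ _
end
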